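/- Let X and Y be types, let V be a linearly ordered type, let glue : X → X → Y be any function, and let C : Y → V be a 'complexity function' such that for all M, N : X with M ≠ N one has C (glue M N) < max (C (glue M M)) (C (glue N N)). Define the sesquilinear pairing of finitely supported functions f, g : X →₀ ℂ to be the element ⟨f,g⟩ = ∑_{M,N} f(M) · conj(g(N)) · δ_{glue M N} of the free ℂ-module Y →₀ ℂ (where δ_y denotes the basis element supported at y with value 1, and conj denotes complex conjugation). Then the pairing is positive: for every f : X →₀ ℂ, ⟨f,f⟩ = 0 implies f = 0. -/
import Mathlib


/-- The abstract complexity-function lemma: a sesquilinear pairing on the free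
`ℂ`-vector space on a set `X`, with values in the free `ℂ`-vector space on `Y`,
defined by a gluing map `glue : X → X → Y`, is positive whenever there is a
complexity function `C : Y → V` into a linearly ordered set which is strictly
smaller on off-diagonal gluings than the max of the corresponding diagonal ones. -/
theorem complexity_function_positivity {X Y V : Type*} [LinearOrder V]
    (glue : X → X → Y) (C : Y → V)
    (hC : ∀ M N : X, M ≠ N → C (glue M N) < max (C (glue M M)) (C (glue N N)))
    (f : X →₀ ℂ)
    (h : (f.sum fun M a => f.sum fun N b =>
        Finsupp.single (glue M N) (a * (starRingEnd ℂ) b)) = (0 : Y →₀ ℂ)) :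
    f = 0 := by
  classical
  by_contra hf
  have hsupp : f.support.Nonempty := Finsupp.support_nonempty_iff.mpr hf
  obtain ⟨M₀, hM₀mem, hM₀max⟩ :=
    f.support.exists_max_image (fun M => C (glue M M)) hsupp
  set y₀ := glue M₀ M₀ with hy₀
  have h0 : ((f.sum fun M a => f.sum fun N b =>
        Finsupp.single (glue M N) (a * (starRingEnd ℂ) b)) : Y →₀ ℂ) y₀ = 0 := by
    rw [h]; rfl
  rw [Finsupp.sum_apply] at h0
  simp only [Finsupp.sum, Finsupp.finset_sum_apply, Finsupp.single_apply] at h0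
  have hdiag : ∀ M ∈ f.support,
      (∑ N ∈ f.support, if glue M N = y₀ then f M * (starRingEnd ℂ) (f N) else 0)
      = if glue M M = y₀ then f M * (starRingEnd ℂ) (f M) else 0 := by
    intro M hM
    apply Finset.sum_eq_single M
    · intro N hN hNM
      have hne : M ≠ N := fun e => hNM e.symm
      have hlt : C (glue M N) < C y₀ := by
        refine lt_of_lt_of_le (hC M N hne) ?_
        exact max_le (hM₀max M hM) (hM₀max N hN)
      rw [if_neg (fun e => absurd (e ▸ hlt) (lt_irrefl _))]
    · intro hMn; exact absurd hM hMn
  rw [Finset.sum_congr rfl hdiag] at h0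
  have hre : ∑ M ∈ f.support,
      ((if glue M M = y₀ then f M * (starRingEnd ℂ) (f M) else 0) : ℂ).re = 0 := by
    rw [← Complex.re_sum, h0, Complex.zero_re]
  have hnonneg : ∀ M ∈ f.support,
      0 ≤ ((if glue M M = y₀ then f M * (starRingEnd ℂ) (f M) else 0) : ℂ).re := by
    intro M _
    split
    · rw [Complex.mul_conj]
      exact_mod_cast Complex.normSq_nonneg _
    · simp
  have hzero := (Finset.sum_eq_zero_iff_of_nonneg hnonneg).mp hre M₀ hM₀mem
  rw [if_pos rfl, Complex.mul_conj] at hzero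
  have : f M₀ = 0 := by
    have := Complex.normSq_eq_zero.mp (by exact_mod_cast hzero)
    exact this
  exact (Finsupp.mem_support_iff.mp hM₀mem) this
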